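/- Let (μ, P, H) be an admissible triple in ℝ³ with H perpendicular, let y ∈ ℝ³ and write X(x) = x − y and X^⊥(x) = X(x) − (P x)(X(x)). Then for all 0 < σ < ρ with μ(∂B_σ(y)) = 0 and μ(∂B_ρ(y)) = 0, the identity μ(B_σ(y))/σ² + ∫_{B_ρ(y) \ B_σ(y)} |H(x)/2 + X^⊥(x)/|X(x)|²|² dμ(x) = μ(B_ρ(y))/ρ² + (1/4) ∫_{B_ρ(y) \ B_σ(y)} |H|² dμ + ρ^{-2} ∫_{B_ρ(y)} ⟨X(x), H(x)⟩ dμ(x) − σ^{-2} ∫_{B_σ(y)} ⟨X(x), H(x)⟩ dμ(x) holds. -/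

import Mathlib

open MeasureTheory Metric Filter
open scoped RealInnerProductSpace ENNReal

noncomputable section

/-- Euclidean three-space. -/
abbrev E3 : Type := EuclideanSpace ℝ (Fin 3)

/-- The support of a measure: points all of whose neighbourhoods have positive measure. -/
def mSupport (μ : Measure E3) : Set E3 := {x | ∀ r > 0, 0 < μ (ball x r)}

/-- An admissible triple `(μ, P, H)`: a finite compactly supported Borel measure, a measurable
family of maps which μ-a.e. are orthogonal projections onto 2-dimensional planes (idempotent,
symmetric, of rank two), and an `L²(μ)` generalized mean curvature `H` satisfying the first
variation identity `∫ trace(P x ∘ DX x) dμ = -2 ∫ ⟨X x, H x⟩ dμ` for every compactly supported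
`C¹` vector field `X`. -/
structure IsAdmissible (μ : Measure E3) (P : E3 → E3 →L[ℝ] E3) (H : E3 → E3) : Prop where
  finite : IsFiniteMeasure μ
  compact_support : IsCompact (mSupport μ)
  meas_P : ∀ v : E3, Measurable fun x => P x v
  meas_H : AEStronglyMeasurable H μ
  proj_ae : ∀ᵐ x ∂μ, (P x).comp (P x) = P x ∧
      (∀ u v : E3, ⟪P x u, v⟫ = ⟪u, P x v⟫) ∧
      Module.finrank ℝ (LinearMap.range ((P x : E3 →ₗ[ℝ] E3))) = 2
  memL2 : MemLp H 2 μ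
  first_variation : ∀ X : E3 → E3, ContDiff ℝ 1 X → HasCompactSupport X →
      ∫ x, LinearMap.trace ℝ E3 ((P x).comp (fderiv ℝ X x) : E3 →ₗ[ℝ] E3) ∂μ
        = -2 * ∫ x, ⟪X x, H x⟫ ∂μ

/-- The generalized mean curvature is perpendicular: `(P x) (H x) = 0` for μ-a.e. `x`. -/
def IsPerp (μ : Measure E3) (P : E3 → E3 →L[ℝ] E3) (H : E3 → E3) : Prop :=
  ∀ᵐ x ∂μ, P x (H x) = 0

/-- The Willmore energy of an admissible triple. -/
def Willmore (μ : Measure E3) (H : E3 → E3) : ℝ := ∫ x, ‖H x‖ ^ 2 ∂μ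

/-- The mass of a measure. -/
def Mass (μ : Measure E3) : ℝ := (μ Set.univ).toReal

namespace TwoRadiusAux

/-- smoothed absolute value -/
def sqe (ε s : ℝ) : ℝ := Real.sqrt (s ^ 2 + ε)
/-- derivative of `sqe` -/
def sqe' (ε s : ℝ) : ℝ := s / sqe ε s
/-- smoothed `min t r2` -/
def mne (ε r2 t : ℝ) : ℝ := (t + r2 - sqe ε (t - r2)) / 2
def mne' (ε r2 t : ℝ) : ℝ := (1 - sqe' ε (t - r2)) / 2
/-- smoothed `max s2 (min t r2)` -/
def cle (ε s2 r2 t : ℝ) : ℝ := (s2 + mne ε r2 t + sqe ε (mne ε r2 t - s2)) / 2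
def cle' (ε s2 r2 t : ℝ) : ℝ := (mne' ε r2 t + sqe' ε (mne ε r2 t - s2) * mne' ε r2 t) / 2
/-- smooth cutoff, `1` for `t ≤ r2`, `0` for `t ≥ r2 + 1` -/
def chi (r2 t : ℝ) : ℝ := Real.smoothTransition (r2 + 1 - t)
def chi' (r2 t : ℝ) : ℝ := deriv (chi r2) t
/-- the approximating radial profile -/
def gap (ε s2 r2 t : ℝ) : ℝ := ((cle ε s2 r2 t)⁻¹ - r2⁻¹) * chi r2 t
def gap' (ε s2 r2 t : ℝ) : ℝ :=
  (-(cle' ε s2 r2 t) / (cle ε s2 r2 t) ^ 2) * chi r2 t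
    + ((cle ε s2 r2 t)⁻¹ - r2⁻¹) * chi' r2 t

variable {ε s2 r2 t : ℝ}

lemma sqe_pos (hε : 0 < ε) (s : ℝ) : 0 < sqe ε s :=
  Real.sqrt_pos.2 (by positivity)

lemma abs_le_sqe (hε : 0 ≤ ε) (s : ℝ) : |s| ≤ sqe ε s := by
  rw [← Real.sqrt_sq_eq_abs]
  exact Real.sqrt_le_sqrt (by linarith)

lemma sqe'_mem (hε : 0 < ε) (s : ℝ) : |sqe' ε s| ≤ 1 := by
  rw [sqe', abs_div, abs_of_pos (sqe_pos hε s)]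
  exact div_le_one_of_le₀ (abs_le_sqe hε.le s) (sqe_pos hε s).le

lemma mne'_mem (hε : 0 < ε) : mne' ε r2 t ∈ Set.Icc (0:ℝ) 1 := by
  have h := abs_le.1 (sqe'_mem hε (t - r2))
  constructor <;> [skip; skip] <;> rw [mne'] <;> · nlinarith [h.1, h.2]

lemma cle'_mem (hε : 0 < ε) : cle' ε s2 r2 t ∈ Set.Icc (0:ℝ) 1 := by
  have h := abs_le.1 (sqe'_mem hε (mne ε r2 t - s2))
  have h2 := mne'_mem (r2 := r2) (t := t) hε
  constructor <;> rw [cle'] <;> nlinarith [h.1, h.2, h2.1, h2.2]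

lemma s2_le_cle (hε : 0 < ε) : s2 ≤ cle ε s2 r2 t := by
  have h := abs_le_sqe hε.le (mne ε r2 t - s2)
  have h2 := neg_abs_le (mne ε r2 t - s2)
  rw [cle]; linarith

lemma mne_le_cle (hε : 0 < ε) : mne ε r2 t ≤ cle ε s2 r2 t := by
  have h := abs_le_sqe hε.le (mne ε r2 t - s2)
  have h2 := le_abs_self (mne ε r2 t - s2)
  rw [cle]; linarith

lemma cle_pos (hε : 0 < ε) (hs2 : 0 < s2) : 0 < cle ε s2 r2 t :=
  lt_of_lt_of_le hs2 (s2_le_cle hε)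

-- chi facts
lemma chi_mem (r2 t : ℝ) : chi r2 t ∈ Set.Icc (0:ℝ) 1 :=
  ⟨Real.smoothTransition.nonneg _, Real.smoothTransition.le_one _⟩

lemma chi_eq_one (h : t ≤ r2) : chi r2 t = 1 :=
  Real.smoothTransition.one_of_one_le (by linarith)

lemma chi_eq_zero (h : r2 + 1 ≤ t) : chi r2 t = 0 :=
  Real.smoothTransition.zero_of_nonpos (by linarith)

lemma contDiff_chi : ContDiff ℝ 1 (chi r2) :=
  (Real.smoothTransition.contDiff (n := 1)).comp
    ((contDiff_const).sub contDiff_id)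

lemma chi'_eq_zero_lt (h : t < r2) : chi' r2 t = 0 := by
  have : chi r2 =ᶠ[nhds t] fun _ => (1:ℝ) := by
    filter_upwards [Iio_mem_nhds h] with u hu
    exact chi_eq_one (le_of_lt hu)
  rw [chi', this.deriv_eq, deriv_const]

lemma chi'_eq_zero_gt (h : r2 + 1 < t) : chi' r2 t = 0 := by
  have : chi r2 =ᶠ[nhds t] fun _ => (0:ℝ) := by
    filter_upwards [Ioi_mem_nhds h] with u hu
    exact chi_eq_zero (le_of_lt hu)
  rw [chi', this.deriv_eq, deriv_const]

lemma continuous_chi' : Continuous (chi' r2) :=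
  ((Real.smoothTransition.contDiff (n := 2)).comp
    ((contDiff_const).sub contDiff_id)).continuous_deriv (by norm_num)

lemma exists_chi'_bound (r2 : ℝ) : ∃ C : ℝ, 0 ≤ C ∧ ∀ t, |chi' r2 t| ≤ C := by
  obtain ⟨C, hC⟩ := (isCompact_Icc (a := r2) (b := r2 + 1)).exists_bound_of_continuousOn
    ((continuous_chi' (r2 := r2)).continuousOn)
  refine ⟨max C 0, le_max_right _ _, fun t => ?_⟩
  rcases lt_or_ge t r2 with h | h
  · simp [chi'_eq_zero_lt h, le_max_right C 0]
  rcases le_or_gt t (r2 + 1) with h2 | h2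
  · exact le_trans (by simpa [Real.norm_eq_abs] using hC t ⟨h, h2⟩) (le_max_left _ _)
  · simp [chi'_eq_zero_gt h2, le_max_right C 0]


-- derivatives
lemma hasDerivAt_sqe (hε : 0 < ε) (s : ℝ) : HasDerivAt (sqe ε) (sqe' ε s) s := by
  have h1 : HasDerivAt (fun s : ℝ => s ^ 2 + ε) (2 * s) s := by
    simpa using (hasDerivAt_pow 2 s).add_const ε
  have h2 : s ^ 2 + ε ≠ 0 := by positivity
  have := h1.sqrt h2
  convert this using 1
  have h3 : Real.sqrt (s ^ 2 + ε) ≠ 0 := ne_of_gt (sqe_pos hε s)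
  · rfl
  rw [sqe', sqe]
  field_simp

lemma hasDerivAt_mne (hε : 0 < ε) (r2 t : ℝ) :
    HasDerivAt (mne ε r2) (mne' ε r2 t) t := by
  have h1 : HasDerivAt (fun t : ℝ => t - r2) 1 t := (hasDerivAt_id t).sub_const r2
  have h2 := ((hasDerivAt_sqe hε (t - r2)).comp t h1)
  have h3 : HasDerivAt (fun t : ℝ => t + r2) 1 t := (hasDerivAt_id t).add_const r2
  have := (h3.sub h2).div_const 2
  convert this using 1
  case e'_9 => rw [mne']; ring
  all_goals rfl

lemma hasDerivAt_cle (hε : 0 < ε) (s2 r2 t : ℝ) :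
    HasDerivAt (cle ε s2 r2) (cle' ε s2 r2 t) t := by
  have h1 := hasDerivAt_mne hε r2 t
  have h2 : HasDerivAt (fun t : ℝ => mne ε r2 t - s2) (mne' ε r2 t) t := h1.sub_const s2
  have h3 := (hasDerivAt_sqe hε (mne ε r2 t - s2)).comp t h2
  have h4 : HasDerivAt (fun t : ℝ => s2 + mne ε r2 t) (mne' ε r2 t) t := h1.const_add s2
  exact (h4.add h3).div_const 2

lemma hasDerivAt_chi (r2 t : ℝ) : HasDerivAt (chi r2) (chi' r2 t) t := by
  have : DifferentiableAt ℝ (chi r2) t :=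
    (contDiff_chi.differentiable one_ne_zero).differentiableAt
  exact this.hasDerivAt

lemma hasDerivAt_gap (hε : 0 < ε) (hs2 : 0 < s2) (r2 t : ℝ) :
    HasDerivAt (gap ε s2 r2) (gap' ε s2 r2 t) t := by
  have h1 := (hasDerivAt_cle hε s2 r2 t).inv (ne_of_gt (cle_pos hε hs2))
  have h2 : HasDerivAt (fun t => (cle ε s2 r2 t)⁻¹ - r2⁻¹)
      (-(cle' ε s2 r2 t) / (cle ε s2 r2 t) ^ 2) t := h1.sub_const _
  exact h2.mul (hasDerivAt_chi r2 t)

lemma contDiff_sqe (hε : 0 < ε) : ContDiff ℝ 1 (sqe ε) :=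
  ((contDiff_id.pow 2).add contDiff_const).sqrt (fun s => by positivity)

lemma contDiff_gap (hε : 0 < ε) (hs2 : 0 < s2) : ContDiff ℝ 1 (gap ε s2 r2) := by
  have hm : ContDiff ℝ 1 (mne ε r2) :=
    ((contDiff_id.add contDiff_const).sub
      ((contDiff_sqe hε).comp (contDiff_id.sub contDiff_const))).div_const 2
  have hc : ContDiff ℝ 1 (cle ε s2 r2) :=
    ((contDiff_const.add hm).add
      ((contDiff_sqe hε).comp (hm.sub contDiff_const))).div_const 2
  exact ((hc.inv (fun t => ne_of_gt (cle_pos hε hs2))).sub contDiff_const).mul contDiff_chi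

lemma continuous_gap' (hε : 0 < ε) (hs2 : 0 < s2) : Continuous (gap' ε s2 r2) := by
  have hsq : Continuous (sqe ε) := (contDiff_sqe hε).continuous
  have hsq' : Continuous (sqe' ε) :=
    continuous_id.div hsq (fun s => ne_of_gt (sqe_pos hε s))
  have hm : Continuous (mne ε r2) :=
    (((continuous_id.add continuous_const).sub
      (hsq.comp (continuous_id.sub continuous_const)))).div_const 2
  have hm' : Continuous (mne' ε r2) :=
    ((continuous_const.sub (hsq'.comp (continuous_id.sub continuous_const)))).div_const 2
  have hc : Continuous (cle ε s2 r2) :=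
    ((continuous_const.add hm).add (hsq.comp (hm.sub continuous_const))).div_const 2
  have hc' : Continuous (cle' ε s2 r2) :=
    ((hm'.add ((hsq'.comp (hm.sub continuous_const)).mul hm'))).div_const 2
  have h1 : Continuous fun t => -(cle' ε s2 r2 t) / (cle ε s2 r2 t) ^ 2 :=
    (hc'.neg).div (hc.pow 2) (fun t => pow_ne_zero 2 (ne_of_gt (cle_pos hε hs2)))
  exact (h1.mul (contDiff_chi (r2 := r2)).continuous).add
    (((hc.inv₀ (fun t => ne_of_gt (cle_pos hε hs2))).sub continuous_const).mul continuous_chi')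

-- bounds
lemma abs_inv_sub_inv_le (hs2 : 0 < s2) (hr : s2 ≤ r2) (hε : 0 < ε) :
    |(cle ε s2 r2 t)⁻¹ - r2⁻¹| ≤ s2⁻¹ := by
  have h1 : (cle ε s2 r2 t)⁻¹ ≤ s2⁻¹ := by
    apply inv_anti₀ hs2 (s2_le_cle hε)
  have h2 : r2⁻¹ ≤ s2⁻¹ := by
    apply inv_anti₀ hs2 hr
  have h3 : 0 < (cle ε s2 r2 t)⁻¹ := inv_pos.2 (cle_pos hε hs2)
  have hr2 : 0 < r2 := lt_of_lt_of_le hs2 hr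
  have h4 : 0 < r2⁻¹ := by positivity
  rw [abs_sub_le_iff]; constructor <;> linarith

lemma gap_bound (hs2 : 0 < s2) (hr : s2 ≤ r2) (hε : 0 < ε) : |gap ε s2 r2 t| ≤ s2⁻¹ := by
  rw [gap, abs_mul]
  have h1 := abs_inv_sub_inv_le (t := t) hs2 hr hε
  have h2 : |chi r2 t| ≤ 1 := by
    rw [abs_of_nonneg (chi_mem r2 t).1]; exact (chi_mem r2 t).2
  calc |(cle ε s2 r2 t)⁻¹ - r2⁻¹| * |chi r2 t| ≤ s2⁻¹ * 1 :=
        mul_le_mul h1 h2 (abs_nonneg _) (by positivity)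
    _ = s2⁻¹ := mul_one _

lemma gap'_bound {Cχ : ℝ} (hs2 : 0 < s2) (hr : s2 ≤ r2) (hε : 0 < ε)
    (hCχ : ∀ t, |chi' r2 t| ≤ Cχ) :
    |gap' ε s2 r2 t| ≤ s2⁻¹ ^ 2 + s2⁻¹ * Cχ := by
  rw [gap']
  have hcle := cle_pos (t := t) (r2 := r2) hε hs2
  have h1 : |(-(cle' ε s2 r2 t) / (cle ε s2 r2 t) ^ 2) * chi r2 t| ≤ s2⁻¹ ^ 2 := by
    rw [abs_mul, abs_div, abs_neg]
    have hc' := cle'_mem (t := t) (s2 := s2) (r2 := r2) hε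
    have e1 : |cle' ε s2 r2 t| ≤ 1 := abs_le.2 ⟨by linarith [hc'.1], hc'.2⟩
    have e2 : s2 ^ 2 ≤ |(cle ε s2 r2 t) ^ 2| := by
      rw [abs_of_nonneg (by positivity)]
      exact pow_le_pow_left₀ hs2.le (s2_le_cle hε) 2
    have e3 : |chi r2 t| ≤ 1 := by
      rw [abs_of_nonneg (chi_mem r2 t).1]; exact (chi_mem r2 t).2
    have e4 : |cle' ε s2 r2 t| / |(cle ε s2 r2 t) ^ 2| ≤ 1 / s2 ^ 2 :=
      div_le_div₀ (by norm_num) e1 (by positivity) e2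
    calc |cle' ε s2 r2 t| / |(cle ε s2 r2 t) ^ 2| * |chi r2 t| ≤ (1 / s2 ^ 2) * 1 :=
          mul_le_mul e4 e3 (abs_nonneg _) (by positivity)
      _ = s2⁻¹ ^ 2 := by rw [mul_one, one_div, inv_pow]
  have h2 : |((cle ε s2 r2 t)⁻¹ - r2⁻¹) * chi' r2 t| ≤ s2⁻¹ * Cχ := by
    rw [abs_mul]
    exact mul_le_mul (abs_inv_sub_inv_le hs2 hr hε) (hCχ t) (abs_nonneg _) (by positivity)
  calc |_ + _| ≤ _ := abs_add_le _ _
    _ ≤ s2⁻¹ ^ 2 + s2⁻¹ * Cχ := add_le_add h1 h2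

lemma gap_eq_zero (h : r2 + 1 ≤ t) : gap ε s2 r2 t = 0 := by
  rw [gap, chi_eq_zero h, mul_zero]

lemma gap'_eq_zero (hε : 0 < ε) (hs2 : 0 < s2) (hr : s2 < r2) (h : r2 + 1 < t) :
    gap' ε s2 r2 t = 0 := by
  rw [gap', chi_eq_zero h.le, chi'_eq_zero_gt h, mul_zero, mul_zero, add_zero]


-- limits
/-- the sequence of smoothing parameters -/
def en (n : ℕ) : ℝ := ((n : ℝ) + 1)⁻¹

/-- pointwise limit of `gap` -/
def Glim (s2 r2 t : ℝ) : ℝ := (max s2 (min t r2))⁻¹ - r2⁻¹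
/-- pointwise limit of `gap'` -/
def Glim' (s2 r2 t : ℝ) : ℝ := if s2 < t ∧ t < r2 then -(t ^ 2)⁻¹ else 0

lemma en_pos (n : ℕ) : 0 < en n := by rw [en]; positivity

lemma tendsto_en : Tendsto en atTop (nhds 0) := by
  have := tendsto_one_div_add_atTop_nhds_zero_nat (𝕜 := ℝ)
  unfold en
  simpa [en, one_div] using this

lemma min_eq_half (a b : ℝ) : min a b = (a + b - |a - b|) / 2 := by
  rcases le_total a b with h | h
  · rw [min_eq_left h, abs_of_nonpos (by linarith)]; ring
  · rw [min_eq_right h, abs_of_nonneg (by linarith)]; ring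

lemma max_eq_half (a b : ℝ) : max a b = (a + b + |b - a|) / 2 := by
  rcases le_total a b with h | h
  · rw [max_eq_right h, abs_of_nonneg (by linarith)]; ring
  · rw [max_eq_left h, abs_of_nonpos (by linarith)]; ring

lemma tendsto_sqe {u : ℕ → ℝ} {u0 : ℝ} (hu : Tendsto u atTop (nhds u0)) :
    Tendsto (fun n => sqe (en n) (u n)) atTop (nhds |u0|) := by
  have h : Tendsto (fun n => (u n) ^ 2 + en n) atTop (nhds (u0 ^ 2 + 0)) :=
    (hu.pow 2).add tendsto_en
  rw [add_zero] at h
  simpa [sqe, Real.sqrt_sq_eq_abs] using h.sqrt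

lemma tendsto_sqe' {u : ℕ → ℝ} {u0 : ℝ} (hu : Tendsto u atTop (nhds u0)) (h0 : u0 ≠ 0) :
    Tendsto (fun n => sqe' (en n) (u n)) atTop (nhds (u0 / |u0|)) :=
  hu.div (tendsto_sqe hu) (abs_ne_zero.2 h0)

lemma gap_gap'_tendsto (hs2 : 0 < s2) (hsr : s2 < r2) (t : ℝ) (ht1 : t ≠ s2) (ht2 : t ≠ r2) :
    Tendsto (fun n : ℕ => gap (en n) s2 r2 t) atTop (nhds (Glim s2 r2 t)) ∧
    Tendsto (fun n : ℕ => gap' (en n) s2 r2 t) atTop (nhds (Glim' s2 r2 t)) := by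
  set m : ℝ := min t r2 with hm_def
  set c : ℝ := max s2 m with hc_def
  have hm0 : m - s2 ≠ 0 := by
    rcases le_total t r2 with h | h
    · rw [hm_def, min_eq_left h]; exact sub_ne_zero.2 ht1
    · rw [hm_def, min_eq_right h]
      exact sub_ne_zero.2 (ne_of_gt hsr)
  have hc_pos : 0 < c := lt_of_lt_of_le hs2 (le_max_left _ _)
  -- limits of components
  have hmt : Tendsto (fun n => mne (en n) r2 t) atTop (nhds m) := by
    have := (tendsto_const_nhds (x := t + r2) (f := atTop (α := ℕ))).sub
      (tendsto_sqe (u := fun _ => t - r2) tendsto_const_nhds)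
    have h2 := this.div_const 2
    rw [hm_def, min_eq_half]
    exact h2
  have hmt' : Tendsto (fun n => mne' (en n) r2 t) atTop
      (nhds ((1 - (t - r2) / |t - r2|) / 2)) := by
    have := (tendsto_const_nhds (x := (1:ℝ)) (f := atTop (α := ℕ))).sub
      (tendsto_sqe' (u := fun _ => t - r2) tendsto_const_nhds (sub_ne_zero.2 ht2))
    exact this.div_const 2
  have hct : Tendsto (fun n => cle (en n) s2 r2 t) atTop (nhds c) := by
    have := ((tendsto_const_nhds (x := s2) (f := atTop (α := ℕ))).add hmt).add
      (tendsto_sqe (u := fun n => mne (en n) r2 t - s2) (hmt.sub_const s2))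
    have h2 := this.div_const 2
    rw [hc_def, max_eq_half]
    exact h2
  have hct' : Tendsto (fun n => cle' (en n) s2 r2 t) atTop
      (nhds (((1 - (t - r2) / |t - r2|) / 2
        + (m - s2) / |m - s2| * ((1 - (t - r2) / |t - r2|) / 2)) / 2)) := by
    have := (hmt'.add ((tendsto_sqe' (u := fun n => mne (en n) r2 t - s2)
      (hmt.sub_const s2) hm0).mul hmt')).div_const 2
    exact this
  -- gap limit
  have hgap : Tendsto (fun n : ℕ => gap (en n) s2 r2 t) atTop
      (nhds ((c⁻¹ - r2⁻¹) * chi r2 t)) :=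
    ((hct.inv₀ (ne_of_gt hc_pos)).sub tendsto_const_nhds).mul tendsto_const_nhds
  have hgap' : Tendsto (fun n : ℕ => gap' (en n) s2 r2 t) atTop
      (nhds ((-(((1 - (t - r2) / |t - r2|) / 2
          + (m - s2) / |m - s2| * ((1 - (t - r2) / |t - r2|) / 2)) / 2) / c ^ 2) * chi r2 t
        + (c⁻¹ - r2⁻¹) * chi' r2 t)) := by
    refine Tendsto.add (Tendsto.mul ?_ tendsto_const_nhds)
      (Tendsto.mul ((hct.inv₀ (ne_of_gt hc_pos)).sub tendsto_const_nhds) tendsto_const_nhds)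
    exact (hct'.neg).div (hct.pow 2) (pow_ne_zero 2 (ne_of_gt hc_pos))
  -- identify the limits
  rcases lt_trichotomy t r2 with htr | htr | htr
  · have hA : (1 - (t - r2) / |t - r2|) / 2 = 1 := by
      rw [abs_of_neg (by linarith), div_neg, div_self (sub_ne_zero.2 ht2)]; ring
    have hmin : m = t := min_eq_left htr.le
    have hchi : chi r2 t = 1 := chi_eq_one htr.le
    have hchi' : chi' r2 t = 0 := chi'_eq_zero_lt htr
    rcases lt_or_gt_of_ne ht1 with hts | hts
    · -- t < s2
      have hB : (m - s2) / |m - s2| = -1 := by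
        rw [hmin, abs_of_neg (by linarith), div_neg, div_self (by rw [hmin] at hm0; exact hm0)]
      have hc' : c = s2 := by rw [hc_def, hmin]; exact max_eq_left (by linarith)
      constructor
      · convert hgap using 2
        rw [Glim, ← hc_def, hc', hchi, mul_one]
      · convert hgap' using 2
        rw [Glim', if_neg (by push_neg; intro h; exact absurd h (not_lt.2 hts.le)), hA, hB,
          hchi, hchi']
        ring
    · -- s2 < t < r2
      have hB : (m - s2) / |m - s2| = 1 := by
        rw [hmin, abs_of_pos (by linarith), div_self (by rw [hmin] at hm0; exact hm0)]
      have hc' : c = t := by rw [hc_def, hmin]; exact max_eq_right (by linarith)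
      constructor
      · convert hgap using 2
        rw [Glim, ← hc_def, hc', hchi, mul_one]
      · convert hgap' using 2
        rw [Glim', if_pos ⟨hts, htr⟩, hA, hB, hchi, hchi', hc']
        ring
  · exact absurd htr ht2
  · -- t > r2
    have hA : (1 - (t - r2) / |t - r2|) / 2 = 0 := by
      rw [abs_of_pos (by linarith), div_self (sub_ne_zero.2 ht2)]; ring
    have hmin : m = r2 := min_eq_right htr.le
    have hc' : c = r2 := by rw [hc_def, hmin]; exact max_eq_right hsr.le
    constructor
    · convert hgap using 2
      rw [Glim, ← hc_def, hc']
      rw [inv_sub_inv (ne_of_gt (lt_trans hs2 hsr)) (ne_of_gt (lt_trans hs2 hsr))]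
      simp
    · convert hgap' using 2
      rw [Glim', if_neg (fun h => lt_asymm htr h.2), hA, hc']
      rw [sub_self r2⁻¹]
      ring



lemma Glim_abs_le (hs2 : 0 < s2) (hsr : s2 ≤ r2) (t : ℝ) : |Glim s2 r2 t| ≤ s2⁻¹ := by
  have h1 : (max s2 (min t r2))⁻¹ ≤ s2⁻¹ := inv_anti₀ hs2 (le_max_left _ _)
  have h2 : r2⁻¹ ≤ s2⁻¹ := inv_anti₀ hs2 hsr
  have h3 : 0 < (max s2 (min t r2))⁻¹ := inv_pos.2 (lt_of_lt_of_le hs2 (le_max_left _ _))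
  have h4 : 0 < r2⁻¹ := inv_pos.2 (lt_of_lt_of_le hs2 hsr)
  rw [Glim, abs_sub_le_iff]; constructor <;> linarith

lemma Glim_low (hsr : s2 < r2) (ht : t < s2) : Glim s2 r2 t = s2⁻¹ - r2⁻¹ := by
  rw [Glim, min_eq_left (le_of_lt (lt_trans ht hsr)), max_eq_left ht.le]

lemma Glim'_low (ht : t < s2) : Glim' s2 r2 t = 0 :=
  if_neg fun h => absurd h.1 (not_lt.2 ht.le)

lemma Glim_mid (hts : s2 < t) (htr : t < r2) : Glim s2 r2 t = t⁻¹ - r2⁻¹ := by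
  rw [Glim, min_eq_left htr.le, max_eq_right hts.le]

lemma Glim'_mid (hts : s2 < t) (htr : t < r2) : Glim' s2 r2 t = -(t ^ 2)⁻¹ := if_pos ⟨hts, htr⟩

lemma Glim_high (hsr : s2 ≤ r2) (ht : r2 ≤ t) : Glim s2 r2 t = 0 := by
  rw [Glim, min_eq_right ht, max_eq_right hsr, sub_self]

lemma Glim'_high (ht : r2 ≤ t) : Glim' s2 r2 t = 0 :=
  if_neg fun h => absurd h.2 (not_lt.2 ht)

lemma Glim'_eq_zero (h : ¬(s2 < t ∧ t < r2)) : Glim' s2 r2 t = 0 := if_neg h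

lemma Glim'_mul_le (hs2 : 0 < s2) (hT0 : 0 ≤ T) (hTq : T ≤ t) :
    |Glim' s2 r2 t * T| ≤ s2⁻¹ := by
  by_cases hc : s2 < t ∧ t < r2
  · rw [Glim'_mid hc.1 hc.2]
    have ht0 : 0 < t := lt_trans hs2 hc.1
    rw [abs_mul, abs_neg, abs_of_nonneg (by positivity : (0:ℝ) ≤ (t ^ 2)⁻¹),
      abs_of_nonneg hT0]
    have h1 : (t ^ 2)⁻¹ * T ≤ (t ^ 2)⁻¹ * t :=
      mul_le_mul_of_nonneg_left hTq (by positivity)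
    have h2 : (t ^ 2)⁻¹ * t = t⁻¹ := by field_simp
    have h3 : t⁻¹ ≤ s2⁻¹ := inv_anti₀ hs2 hc.1.le
    linarith
  · rw [Glim'_eq_zero hc, zero_mul, abs_zero]
    positivity

end TwoRadiusAux

namespace TwoRadiusE3

/-- the standard orthonormal basis -/
def e : OrthonormalBasis (Fin 3) ℝ E3 := EuclideanSpace.basisFun (Fin 3) ℝ

lemma trace_eq_sum (f : E3 →ₗ[ℝ] E3) :
    LinearMap.trace ℝ E3 f = ∑ i, f (e i) i := by
  rw [LinearMap.trace_eq_matrix_trace ℝ e.toBasis f, Matrix.trace]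
  congr 1
  ext i
  rw [Matrix.diag, LinearMap.toMatrix_apply, e.coe_toBasis_repr_apply, e.coe_toBasis]
  rfl

lemma inner_eq_sum (v w : E3) : ⟪v, w⟫ = ∑ i, v i * w i := by
  simp [PiLp.inner_apply, RCLike.inner_apply, conj_trivial]
  exact Finset.sum_congr rfl fun i _ => mul_comm _ _

lemma trace_proj (Q : E3 →L[ℝ] E3) (hidem : Q.comp Q = Q)
    (hrank : Module.finrank ℝ (LinearMap.range ((Q : E3 →ₗ[ℝ] E3))) = 2) :
    LinearMap.trace ℝ E3 (Q : E3 →ₗ[ℝ] E3) = 2 := by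
  have hproj : LinearMap.IsProj (LinearMap.range ((Q : E3 →ₗ[ℝ] E3)))
      (Q : E3 →ₗ[ℝ] E3) := by
    constructor
    · intro x; exact LinearMap.mem_range_self _ x
    · rintro x ⟨u, rfl⟩
      exact DFunLike.congr_fun (ContinuousLinearMap.coe_inj.2 hidem) u
  rw [hproj.trace, hrank]
  norm_num

lemma trace_P_comp (Q D : E3 →L[ℝ] E3) (hidem : Q.comp Q = Q)
    (hrank : Module.finrank ℝ (LinearMap.range ((Q : E3 →ₗ[ℝ] E3))) = 2)
    (a c : ℝ) (w : E3) (hD : ∀ v, D v = a • v + (c * ⟪w, v⟫) • w) :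
    LinearMap.trace ℝ E3 ((Q.comp D : E3 →L[ℝ] E3) : E3 →ₗ[ℝ] E3)
      = 2 * a + c * ⟪Q w, w⟫ := by
  rw [trace_eq_sum]
  have hterm : ∀ i, ((Q.comp D : E3 →L[ℝ] E3) : E3 →ₗ[ℝ] E3) (e i) i
      = a * (Q (e i) : E3) i + c * (w i * (Q w : E3) i) := by
    intro i
    have h1 : ((Q.comp D : E3 →L[ℝ] E3) : E3 →ₗ[ℝ] E3) (e i) = Q (D (e i)) := rfl
    rw [h1, hD (e i), map_add, Q.map_smul, Q.map_smul]
    have hw : ⟪w, e i⟫ = w i := by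
      rw [show (e i : E3) = EuclideanSpace.single i (1:ℝ) from EuclideanSpace.basisFun_apply (𝕜 := ℝ) (ι := Fin 3) i,
        EuclideanSpace.inner_single_right]
      simp
    rw [hw]
    simp only [PiLp.add_apply, PiLp.smul_apply, smul_eq_mul]
    ring
  rw [Finset.sum_congr rfl (fun i _ => hterm i), Finset.sum_add_distrib, ← Finset.mul_sum,
    ← Finset.mul_sum]
  have hQtr : ∑ i, (Q (e i) : E3) i = 2 := by
    have h := trace_eq_sum (Q : E3 →ₗ[ℝ] E3)
    rw [trace_proj Q hidem hrank] at h
    exact h.symm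
  have hQw : ∑ i, w i * (Q w : E3) i = ⟪Q w, w⟫ := by
    rw [real_inner_comm, inner_eq_sum]
  rw [hQtr, hQw]
  ring

end TwoRadiusE3


namespace TwoRadiusFV
open TwoRadiusE3

lemma fv_radial (μ : Measure E3) (P : E3 → E3 →L[ℝ] E3) (H : E3 → E3)
    (hadm : IsAdmissible μ P H) (y : E3) (g : ℝ → ℝ) (hg : ContDiff ℝ 1 g)
    (R : ℝ) (hgR : ∀ t, R ≤ t → g t = 0) :
    ∫ x, (2 * g (‖x - y‖ ^ 2) + 2 * deriv g (‖x - y‖ ^ 2) * ⟪P x (x - y), x - y⟫) ∂μ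
      = -2 * ∫ x, g (‖x - y‖ ^ 2) * ⟪x - y, H x⟫ ∂μ := by
  set q : E3 → ℝ := fun x => ‖x - y‖ ^ 2 with hq_def
  set V : E3 → E3 := fun x => g (q x) • (x - y) with hV_def
  -- derivative of V
  have hsub : ∀ x : E3, HasFDerivAt (fun x : E3 => x - y)
      (ContinuousLinearMap.id ℝ E3) x := fun x => (hasFDerivAt_id x).sub_const y
  have hqd : ∀ x : E3, HasFDerivAt q
      (2 • (innerSL ℝ (x - y)).comp (ContinuousLinearMap.id ℝ E3)) x :=
    fun x => (hsub x).norm_sq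
  have hgq : ∀ x : E3, HasFDerivAt (fun x => g (q x))
      ((deriv g (q x)) • (2 • (innerSL ℝ (x - y)).comp (ContinuousLinearMap.id ℝ E3))) x := by
    intro x
    have hd : HasDerivAt g (deriv g (q x)) (q x) :=
      ((hg.differentiable one_ne_zero).differentiableAt).hasDerivAt
    exact hd.comp_hasFDerivAt x (hqd x)
  have hfd : ∀ x : E3, HasFDerivAt V
      (g (q x) • ContinuousLinearMap.id ℝ E3 +
        ((deriv g (q x)) • (2 • (innerSL ℝ (x - y)).comp
          (ContinuousLinearMap.id ℝ E3))).smulRight (x - y)) x :=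
    fun x => (hgq x).smul (hsub x)
  -- C¹
  have hV1 : ContDiff ℝ 1 V := by
    have hqc : ContDiff ℝ 1 q := (contDiff_id.sub contDiff_const).norm_sq ℝ
    exact (hg.comp hqc).smul (contDiff_id.sub contDiff_const)
  -- compact support
  have hV2 : HasCompactSupport V := by
    apply HasCompactSupport.intro (isCompact_closedBall y (Real.sqrt (max R 0)))
    intro x hx
    simp only [mem_closedBall, not_le] at hx
    have h1 : Real.sqrt (max R 0) < ‖x - y‖ := by rwa [dist_eq_norm] at hx
    have h2 : max R 0 < ‖x - y‖ ^ 2 := by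
      have hs := Real.sq_sqrt (le_max_right R 0)
      nlinarith [Real.sqrt_nonneg (max R 0), h1]
    have : g (q x) = 0 := hgR _ (le_of_lt (lt_of_le_of_lt (le_max_left R 0) h2))
    simp [hV_def, this]
  -- a.e. trace identity
  have hae : (fun x => LinearMap.trace ℝ E3 ((P x).comp (fderiv ℝ V x) : E3 →ₗ[ℝ] E3))
      =ᵐ[μ] fun x => 2 * g (q x) + 2 * deriv g (q x) * ⟪P x (x - y), x - y⟫ := by
    filter_upwards [hadm.proj_ae] with x hx
    obtain ⟨hidem, hsymm, hrank⟩ := hx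
    rw [(hfd x).fderiv]
    have hD : ∀ v : E3, (g (q x) • ContinuousLinearMap.id ℝ E3 +
        ((deriv g (q x)) • (2 • (innerSL ℝ (x - y)).comp
          (ContinuousLinearMap.id ℝ E3))).smulRight (x - y)) v
        = g (q x) • v + ((2 * deriv g (q x)) * ⟪x - y, v⟫) • (x - y) := by
      intro v
      simp only [ContinuousLinearMap.add_apply, ContinuousLinearMap.smul_apply,
        ContinuousLinearMap.smulRight_apply, ContinuousLinearMap.id_apply,
        ContinuousLinearMap.coe_comp', Function.comp_apply, innerSL_apply_apply, smul_eq_mul,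
        ContinuousLinearMap.coe_smul', Pi.smul_apply]
      module
    rw [trace_P_comp (P x) _ hidem hrank (g (q x)) (2 * deriv g (q x)) (x - y) hD]
  calc ∫ x, (2 * g (‖x - y‖ ^ 2) + 2 * deriv g (‖x - y‖ ^ 2) * ⟪P x (x - y), x - y⟫) ∂μ
      = ∫ x, LinearMap.trace ℝ E3 ((P x).comp (fderiv ℝ V x) : E3 →ₗ[ℝ] E3) ∂μ :=
        (integral_congr_ae hae).symm
    _ = -2 * ∫ x, ⟪V x, H x⟫ ∂μ := hadm.first_variation V hV1 hV2
    _ = -2 * ∫ x, g (‖x - y‖ ^ 2) * ⟪x - y, H x⟫ ∂μ := by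
        congr 1
        apply integral_congr_ae
        filter_upwards with x
        rw [hV_def]
        exact real_inner_smul_left _ _ _

end TwoRadiusFV


set_option maxHeartbeats 2000000 in
open TwoRadiusAux TwoRadiusE3 TwoRadiusFV in
/-- the two-radius monotonicity identity (Equation (1.5) of the paper). For an
admissible triple with perpendicular mean curvature, `y ∈ ℝ³`, `X(x) = x − y`,
`X^⊥(x) = X(x) − (P x)(X(x))`, and all `0 < σ < ρ` whose boundary spheres are μ-null:
`μ(B_σ(y))/σ² + ∫_{B_ρ(y) \ B_σ(y)} |H/2 + X^⊥/|X|²|² dμ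
  = μ(B_ρ(y))/ρ² + (1/4)∫_{B_ρ(y) \ B_σ(y)} |H|² dμ
    + ρ⁻² ∫_{B_ρ(y)} ⟨X, H⟩ dμ − σ⁻² ∫_{B_σ(y)} ⟨X, H⟩ dμ`. -/
theorem two_radius_monotonicity_identity (μ : Measure E3) (P : E3 → E3 →L[ℝ] E3) (H : E3 → E3)
    (hadm : IsAdmissible μ P H) (hperp : IsPerp μ P H) (y : E3) :
    ∀ σ ρ : ℝ, 0 < σ → σ < ρ → μ (sphere y σ) = 0 → μ (sphere y ρ) = 0 →
      (μ (ball y σ)).toReal / σ ^ 2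
        + ∫ x in ball y ρ \ ball y σ,
            ‖(1 / 2 : ℝ) • H x + (‖x - y‖ ^ 2)⁻¹ • ((x - y) - P x (x - y))‖ ^ 2 ∂μ
        = (μ (ball y ρ)).toReal / ρ ^ 2
          + (1 / 4 : ℝ) * ∫ x in ball y ρ \ ball y σ, ‖H x‖ ^ 2 ∂μ
          + (ρ ^ 2)⁻¹ * ∫ x in ball y ρ, ⟪x - y, H x⟫ ∂μ
          - (σ ^ 2)⁻¹ * ∫ x in ball y σ, ⟪x - y, H x⟫ ∂μ := by
  intro σ ρ hσ hσρ hnullσ hnullρ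
  haveI : IsFiniteMeasure μ := hadm.finite
  have hρ : 0 < ρ := lt_trans hσ hσρ
  have hs2 : 0 < σ ^ 2 := by positivity
  have hr2 : 0 < ρ ^ 2 := by positivity
  have hsr : σ ^ 2 < ρ ^ 2 := by
    have := pow_lt_pow_left₀ hσρ hσ.le (two_ne_zero)
    exact this
  obtain ⟨Cχ, hCχ0, hCχ⟩ := TwoRadiusAux.exists_chi'_bound (ρ ^ 2)
  -- continuity / measurability of the building blocks
  have hXc : Continuous (fun x : E3 => x - y) := continuous_id.sub continuous_const
  have hq_cont : Continuous (fun x : E3 => ‖x - y‖ ^ 2) := (hXc.norm).pow 2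
  have hq_meas := hq_cont.measurable
  have hPX_meas : Measurable fun x : E3 => P x (x - y) := by
    have hrepr : (fun x : E3 => P x (x - y))
        = fun x : E3 => ∑ i : Fin 3, ((x - y) i) • P x (TwoRadiusE3.e i) := by
      funext x
      conv_lhs => rw [← (TwoRadiusE3.e).sum_repr (x - y)]
      rw [map_sum]
      exact Finset.sum_congr rfl fun i _ => (P x).map_smul _ _
    rw [hrepr]
    exact Finset.measurable_sum _ (fun i _ =>
      (((continuous_apply i).comp ((PiLp.continuous_ofLp 2 _).comp hXc)).measurable).smul (hadm.meas_P _))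
  have hT_meas : Measurable fun x : E3 => ⟪P x (x - y), x - y⟫ :=
    hPX_meas.inner hXc.measurable
  have hXp_meas : Measurable fun x : E3 => (x - y) - P x (x - y) :=
    hXc.measurable.sub hPX_meas
  have hH_aem : AEMeasurable H μ := hadm.meas_H.aemeasurable
  have hinner_aesm : AEStronglyMeasurable (fun x : E3 => ⟪x - y, H x⟫) μ :=
    (AEMeasurable.inner hXc.measurable.aemeasurable hH_aem).aestronglyMeasurable
  have hH1 : Integrable H μ :=
    memLp_one_iff_integrable.mp (hadm.memL2.mono_exponent (by norm_num))
  have hH2 : Integrable (fun x => ‖H x‖ ^ 2) μ := by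
    have h := hadm.memL2.integrable_norm_rpow two_ne_zero ENNReal.ofNat_ne_top
    have h2 : ((2 : ℝ≥0∞)).toReal = (2 : ℝ) := by norm_num
    rw [h2] at h
    convert h using 2 with x
    rw [show ((2:ℝ)) = ((2:ℕ) : ℝ) by norm_num, Real.rpow_natCast]
  -- a.e. geometric facts from the projection property
  have hgood : ∀ᵐ x ∂μ, (0 ≤ ⟪P x (x - y), x - y⟫)
      ∧ (⟪P x (x - y), x - y⟫ ≤ ‖x - y‖ ^ 2)
      ∧ (‖x - y‖ ^ 2 - ⟪P x (x - y), x - y⟫ = ‖(x - y) - P x (x - y)‖ ^ 2)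
      ∧ (⟪H x, (x - y) - P x (x - y)⟫ = ⟪x - y, H x⟫) := by
    filter_upwards [hadm.proj_ae, hperp] with x hx hpx
    obtain ⟨hidem, hsymm, -⟩ := hx
    have hPP : P x (P x (x - y)) = P x (x - y) := by
      have := ContinuousLinearMap.ext_iff.1 hidem (x - y)
      simpa using this
    have hTP : ⟪P x (x - y), x - y⟫ = ⟪P x (x - y), P x (x - y)⟫ := by
      conv_lhs => rw [← hPP]
      exact hsymm _ _
    have hTnn : 0 ≤ ⟪P x (x - y), x - y⟫ := by rw [hTP]; exact real_inner_self_nonneg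
    have hnorm : ⟪P x (x - y), x - y⟫ = ‖P x (x - y)‖ ^ 2 := by
      rw [hTP, real_inner_self_eq_norm_sq]
    have hcs := real_inner_le_norm (P x (x - y)) (x - y)
    have hTle : ⟪P x (x - y), x - y⟫ ≤ ‖x - y‖ ^ 2 := by
      nlinarith [sq_nonneg (‖x - y‖ - ‖P x (x - y)‖), norm_nonneg (P x (x - y)),
        norm_nonneg (x - y)]
    refine ⟨hTnn, hTle, ?_, ?_⟩
    · have := norm_sub_sq_real (x - y) (P x (x - y))
      have hcomm : ⟪x - y, P x (x - y)⟫ = ⟪P x (x - y), x - y⟫ := real_inner_comm _ _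
      rw [this, hcomm, ← hnorm]
      ring
    · have h1 : ⟪H x, (x - y) - P x (x - y)⟫
          = ⟪H x, x - y⟫ - ⟪H x, P x (x - y)⟫ := inner_sub_right _ _ _
      have h2 : ⟪H x, P x (x - y)⟫ = 0 := by
        rw [← hsymm (H x) (x - y), hpx, inner_zero_left]
      rw [h1, h2, real_inner_comm]
      ring
  -- a.e. the point is not on the two critical spheres
  have hsph : ∀ᵐ x ∂μ, ‖x - y‖ ^ 2 ≠ σ ^ 2 ∧ ‖x - y‖ ^ 2 ≠ ρ ^ 2 := by
    have key : ∀ r : ℝ, 0 < r → μ (sphere y r) = 0 →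
        ∀ᵐ x ∂μ, ‖x - y‖ ^ 2 ≠ r ^ 2 := by
      intro r hr hnull
      have hsub : {x : E3 | ‖x - y‖ ^ 2 = r ^ 2} ⊆ sphere y r := by
        intro x hx
        have : ‖x - y‖ = r := by
          have := congrArg Real.sqrt hx
          rwa [Real.sqrt_sq (norm_nonneg _), Real.sqrt_sq hr.le] at this
        simpa [mem_sphere, dist_eq_norm] using this
      have h0 : μ {x : E3 | ‖x - y‖ ^ 2 = r ^ 2} = 0 := measure_mono_null hsub hnull
      rw [ae_iff]
      convert h0 using 2
      simp
    filter_upwards [key σ hσ hnullσ, key ρ hρ hnullρ] with x h1 h2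
    exact ⟨h1, h2⟩
  -- ball membership in terms of the squared norm
  have hball : ∀ (r : ℝ), 0 < r → ∀ x : E3, x ∈ ball y r ↔ ‖x - y‖ ^ 2 < r ^ 2 := by
    intro r hr x
    rw [mem_ball, dist_eq_norm]
    exact (pow_lt_pow_iff_left₀ (norm_nonneg _) hr.le two_ne_zero).symm
  -- first variation applied to the approximating radial fields
  have hfv : ∀ n : ℕ,
      ∫ x, (2 * gap (en n) (σ ^ 2) (ρ ^ 2) (‖x - y‖ ^ 2)
        + 2 * gap' (en n) (σ ^ 2) (ρ ^ 2) (‖x - y‖ ^ 2) * ⟪P x (x - y), x - y⟫) ∂μ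
      = -2 * ∫ x, gap (en n) (σ ^ 2) (ρ ^ 2) (‖x - y‖ ^ 2) * ⟪x - y, H x⟫ ∂μ := by
    intro n
    have hderiv : ∀ t, deriv (gap (en n) (σ ^ 2) (ρ ^ 2)) t = gap' (en n) (σ ^ 2) (ρ ^ 2) t :=
      fun t => (hasDerivAt_gap (en_pos n) hs2 (ρ ^ 2) t).deriv
    have h := fv_radial μ P H hadm y (gap (en n) (σ ^ 2) (ρ ^ 2))
      (contDiff_gap (en_pos n) hs2) (ρ ^ 2 + 1) (fun t ht => gap_eq_zero ht)
    simpa only [hderiv] using h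
  -- dominated convergence
  have hDCT1 : Tendsto (fun n => ∫ x, (2 * gap (en n) (σ ^ 2) (ρ ^ 2) (‖x - y‖ ^ 2)
        + 2 * gap' (en n) (σ ^ 2) (ρ ^ 2) (‖x - y‖ ^ 2) * ⟪P x (x - y), x - y⟫) ∂μ) atTop
      (nhds (∫ x, (2 * Glim (σ ^ 2) (ρ ^ 2) (‖x - y‖ ^ 2)
        + 2 * Glim' (σ ^ 2) (ρ ^ 2) (‖x - y‖ ^ 2) * ⟪P x (x - y), x - y⟫) ∂μ)) := by
    apply tendsto_integral_of_dominated_convergence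
      (bound := fun _ => 2 * (σ ^ 2)⁻¹ + 2 * ((((σ ^ 2)⁻¹) ^ 2 + (σ ^ 2)⁻¹ * Cχ) * (ρ ^ 2 + 1)))
    · intro n
      exact ((((contDiff_gap (en_pos n) hs2).continuous.comp hq_cont).measurable.const_mul
        2).add ((((continuous_gap' (en_pos n) hs2).comp hq_cont).measurable.const_mul 2).mul
          hT_meas)).aestronglyMeasurable
    · exact integrable_const _
    · intro n
      filter_upwards [hgood] with x hx
      obtain ⟨hT0, hTq, -, -⟩ := hx
      rw [Real.norm_eq_abs]
      have hb1 : |2 * gap (en n) (σ ^ 2) (ρ ^ 2) (‖x - y‖ ^ 2)| ≤ 2 * (σ ^ 2)⁻¹ := by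
        rw [abs_mul, abs_two]
        exact mul_le_mul_of_nonneg_left (gap_bound hs2 hsr.le (en_pos n)) (by norm_num)
      have hb2 : |2 * gap' (en n) (σ ^ 2) (ρ ^ 2) (‖x - y‖ ^ 2) * ⟪P x (x - y), x - y⟫|
          ≤ 2 * ((((σ ^ 2)⁻¹) ^ 2 + (σ ^ 2)⁻¹ * Cχ) * (ρ ^ 2 + 1)) := by
        rcases le_or_gt (‖x - y‖ ^ 2) (ρ ^ 2 + 1) with hc | hc
        · rw [abs_mul, abs_mul, abs_two]
          have e1 : |gap' (en n) (σ ^ 2) (ρ ^ 2) (‖x - y‖ ^ 2)|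
              ≤ ((σ ^ 2)⁻¹) ^ 2 + (σ ^ 2)⁻¹ * Cχ :=
            gap'_bound hs2 hsr.le (en_pos n) hCχ
          have e2 : |⟪P x (x - y), x - y⟫| ≤ ρ ^ 2 + 1 := by
            rw [abs_of_nonneg hT0]; exact le_trans hTq hc
          have e3 : (0:ℝ) ≤ |gap' (en n) (σ ^ 2) (ρ ^ 2) (‖x - y‖ ^ 2)| := abs_nonneg _
          have e4 : (0:ℝ) ≤ |⟪P x (x - y), x - y⟫| := abs_nonneg _
          nlinarith [e1, e2, e3, e4]
        · rw [gap'_eq_zero (en_pos n) hs2 hsr hc, mul_zero, zero_mul, abs_zero]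
          have : (0:ℝ) ≤ ((σ ^ 2)⁻¹) ^ 2 + (σ ^ 2)⁻¹ * Cχ := by positivity
          nlinarith [this]
      calc |2 * gap (en n) (σ ^ 2) (ρ ^ 2) (‖x - y‖ ^ 2)
            + 2 * gap' (en n) (σ ^ 2) (ρ ^ 2) (‖x - y‖ ^ 2) * ⟪P x (x - y), x - y⟫|
          ≤ |2 * gap (en n) (σ ^ 2) (ρ ^ 2) (‖x - y‖ ^ 2)|
            + |2 * gap' (en n) (σ ^ 2) (ρ ^ 2) (‖x - y‖ ^ 2) * ⟪P x (x - y), x - y⟫| :=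
            abs_add_le _ _
        _ ≤ _ := add_le_add hb1 hb2
    · filter_upwards [hsph] with x hx
      obtain ⟨hg, hg'⟩ := gap_gap'_tendsto hs2 hsr (‖x - y‖ ^ 2) hx.1 hx.2
      exact (hg.const_mul 2).add ((hg'.const_mul 2).mul_const _)
  have hDCT2 : Tendsto (fun n => ∫ x, gap (en n) (σ ^ 2) (ρ ^ 2) (‖x - y‖ ^ 2)
        * ⟪x - y, H x⟫ ∂μ) atTop
      (nhds (∫ x, Glim (σ ^ 2) (ρ ^ 2) (‖x - y‖ ^ 2) * ⟪x - y, H x⟫ ∂μ)) := by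
    apply tendsto_integral_of_dominated_convergence
      (bound := fun x => (σ ^ 2)⁻¹ * (Real.sqrt (ρ ^ 2 + 1) * ‖H x‖))
    · intro n
      exact ((((contDiff_gap (en_pos n) hs2).continuous.comp
        hq_cont).measurable.aemeasurable).mul hinner_aesm.aemeasurable).aestronglyMeasurable
    · exact ((hH1.norm.const_mul (Real.sqrt (ρ ^ 2 + 1))).const_mul ((σ ^ 2)⁻¹))
    · intro n
      filter_upwards with x
      rw [Real.norm_eq_abs, abs_mul]
      rcases le_or_gt (‖x - y‖ ^ 2) (ρ ^ 2 + 1) with hc | hc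
      · have hX : ‖x - y‖ ≤ Real.sqrt (ρ ^ 2 + 1) := by
          rw [← Real.sqrt_sq (norm_nonneg (x - y))]
          exact Real.sqrt_le_sqrt hc
        have e2 : |⟪x - y, H x⟫| ≤ Real.sqrt (ρ ^ 2 + 1) * ‖H x‖ :=
          le_trans (abs_real_inner_le_norm _ _)
            (mul_le_mul_of_nonneg_right hX (norm_nonneg _))
        exact mul_le_mul (gap_bound hs2 hsr.le (en_pos n)) e2 (abs_nonneg _)
          (inv_nonneg.2 hs2.le)
      · rw [gap_eq_zero hc.le, abs_zero, zero_mul]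
        positivity
    · filter_upwards [hsph] with x hx
      exact ((gap_gap'_tendsto hs2 hsr (‖x - y‖ ^ 2) hx.1 hx.2).1).mul_const _
  have hkey : ∫ x, (2 * Glim (σ ^ 2) (ρ ^ 2) (‖x - y‖ ^ 2)
        + 2 * Glim' (σ ^ 2) (ρ ^ 2) (‖x - y‖ ^ 2) * ⟪P x (x - y), x - y⟫) ∂μ
      = -2 * ∫ x, Glim (σ ^ 2) (ρ ^ 2) (‖x - y‖ ^ 2) * ⟪x - y, H x⟫ ∂μ :=
    tendsto_nhds_unique hDCT1 (Tendsto.congr (fun n => (hfv n).symm) (hDCT2.const_mul (-2)))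
  -- notation shortcuts used below
  have hAmeas : MeasurableSet (ball y ρ \ ball y σ) := measurableSet_ball.diff measurableSet_ball
  have hSsub : ball y σ ⊆ ball y ρ := ball_subset_ball hσρ.le
  have hSA : ball y σ ∪ (ball y ρ \ ball y σ) = ball y ρ := Set.union_diff_cancel hSsub
  have hdisj : Disjoint (ball y σ) (ball y ρ \ ball y σ) := Set.disjoint_sdiff_right
  -- continuity / measurability of the limit profiles
  have hGlim_cont : Continuous (Glim (σ ^ 2) (ρ ^ 2)) := by
    unfold TwoRadiusAux.Glim
    exact ((continuous_const.max (continuous_id.min continuous_const)).inv₀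
      (fun t => ne_of_gt (lt_of_lt_of_le hs2 (le_max_left _ _)))).sub continuous_const
  have hGlim'_meas : Measurable (Glim' (σ ^ 2) (ρ ^ 2)) := by
    unfold TwoRadiusAux.Glim'
    exact Measurable.ite (measurableSet_Ioo (a := σ ^ 2) (b := ρ ^ 2))
      ((measurable_id.pow_const 2).inv.neg) measurable_const
  -- global integrability of the two limit integrands
  have intGL : Integrable (fun x => 2 * Glim (σ ^ 2) (ρ ^ 2) (‖x - y‖ ^ 2)
      + 2 * Glim' (σ ^ 2) (ρ ^ 2) (‖x - y‖ ^ 2) * ⟪P x (x - y), x - y⟫) μ := by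
    apply Integrable.mono' (integrable_const (2 * (σ ^ 2)⁻¹ + 2 * (σ ^ 2)⁻¹))
    · exact (((hGlim_cont.comp hq_cont).measurable.const_mul 2).add
        (((hGlim'_meas.comp hq_meas).const_mul 2).mul hT_meas)).aestronglyMeasurable
    · filter_upwards [hgood] with x hx
      obtain ⟨hT0, hTq, -, -⟩ := hx
      rw [Real.norm_eq_abs]
      have hb1 : |2 * Glim (σ ^ 2) (ρ ^ 2) (‖x - y‖ ^ 2)| ≤ 2 * (σ ^ 2)⁻¹ := by
        rw [abs_mul, abs_two]
        exact mul_le_mul_of_nonneg_left (Glim_abs_le hs2 hsr.le _) (by norm_num)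
      have hb2 : |2 * Glim' (σ ^ 2) (ρ ^ 2) (‖x - y‖ ^ 2) * ⟪P x (x - y), x - y⟫|
          ≤ 2 * (σ ^ 2)⁻¹ := by
        rw [mul_assoc, abs_mul, abs_two]
        exact mul_le_mul_of_nonneg_left (Glim'_mul_le hs2 hT0 hTq) (by norm_num)
      calc |2 * Glim (σ ^ 2) (ρ ^ 2) (‖x - y‖ ^ 2)
            + 2 * Glim' (σ ^ 2) (ρ ^ 2) (‖x - y‖ ^ 2) * ⟪P x (x - y), x - y⟫|
          ≤ |2 * Glim (σ ^ 2) (ρ ^ 2) (‖x - y‖ ^ 2)|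
            + |2 * Glim' (σ ^ 2) (ρ ^ 2) (‖x - y‖ ^ 2) * ⟪P x (x - y), x - y⟫| := abs_add_le _ _
        _ ≤ _ := add_le_add hb1 hb2
  have intRL : Integrable (fun x => Glim (σ ^ 2) (ρ ^ 2) (‖x - y‖ ^ 2) * ⟪x - y, H x⟫) μ := by
    apply Integrable.mono' ((hH1.norm.const_mul (Real.sqrt (ρ ^ 2 + 1))).const_mul ((σ ^ 2)⁻¹))
    · exact ((hGlim_cont.comp hq_cont).measurable.aemeasurable.mul
        hinner_aesm.aemeasurable).aestronglyMeasurable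
    · filter_upwards with x
      rw [Real.norm_eq_abs, abs_mul]
      rcases le_or_gt (‖x - y‖ ^ 2) (ρ ^ 2 + 1) with hc | hc
      · have hX : ‖x - y‖ ≤ Real.sqrt (ρ ^ 2 + 1) := by
          rw [← Real.sqrt_sq (norm_nonneg (x - y))]
          exact Real.sqrt_le_sqrt hc
        have e2 : |⟪x - y, H x⟫| ≤ Real.sqrt (ρ ^ 2 + 1) * ‖H x‖ :=
          le_trans (abs_real_inner_le_norm _ _)
            (mul_le_mul_of_nonneg_right hX (norm_nonneg _))
        exact mul_le_mul (Glim_abs_le hs2 hsr.le _) e2 (abs_nonneg _) (inv_nonneg.2 hs2.le)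
      · rw [Glim_high hsr.le (by linarith), abs_zero, zero_mul]
        positivity
  -- integrability of the various annulus integrands
  have hIball : IntegrableOn (fun x : E3 => ⟪x - y, H x⟫) (ball y ρ) μ := by
    apply Integrable.mono' ((hH1.norm.const_mul ρ).restrict) hinner_aesm.restrict
    rw [ae_restrict_iff' measurableSet_ball]
    filter_upwards with x hx
    rw [Real.norm_eq_abs]
    have hXρ : ‖x - y‖ ≤ ρ := by rw [mem_ball, dist_eq_norm] at hx; exact hx.le
    exact le_trans (abs_real_inner_le_norm _ _)
      (mul_le_mul_of_nonneg_right hXρ (norm_nonneg _))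
  have hIS : IntegrableOn (fun x : E3 => ⟪x - y, H x⟫) (ball y σ) μ := hIball.mono_set hSsub
  have hIA : IntegrableOn (fun x : E3 => ⟪x - y, H x⟫) (ball y ρ \ ball y σ) μ :=
    hIball.mono_set Set.diff_subset
  -- a.e. bounds hold on the annulus: σ² < ‖x-y‖² < ρ²
  have hannbound : ∀ᵐ x ∂μ, x ∈ ball y ρ \ ball y σ →
      σ ^ 2 < ‖x - y‖ ^ 2 ∧ ‖x - y‖ ^ 2 < ρ ^ 2 := by
    filter_upwards [hsph] with x hx hxA
    obtain ⟨hxρ, hxσ⟩ := hxA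
    refine ⟨lt_of_le_of_ne (le_of_not_gt (fun h => hxσ ((hball σ hσ x).2 h))) (Ne.symm hx.1),
      (hball ρ hρ x).1 hxρ⟩
  have hJ_int : IntegrableOn
      (fun x => ((‖x - y‖ ^ 2) ^ 2)⁻¹ * ‖x - y - P x (x - y)‖ ^ 2)
      (ball y ρ \ ball y σ) μ := by
    apply Integrable.mono' ((integrable_const ((σ ^ 2)⁻¹)).restrict)
      ((((hq_meas.pow_const 2).inv).mul
        ((hXp_meas.norm).pow_const 2)).aestronglyMeasurable.restrict)
    rw [ae_restrict_iff' hAmeas]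
    filter_upwards [hgood, hannbound] with x h1 h2 hxA
    obtain ⟨hqs, hqr⟩ := h2 hxA
    have hq0 : 0 < ‖x - y‖ ^ 2 := lt_trans hs2 hqs
    have hXp : ‖x - y - P x (x - y)‖ ^ 2 ≤ ‖x - y‖ ^ 2 := by
      rw [← h1.2.2.1]; linarith [h1.1]
    show ‖((‖x - y‖ ^ 2) ^ 2)⁻¹ * ‖x - y - P x (x - y)‖ ^ 2‖ ≤ (σ ^ 2)⁻¹
    rw [Real.norm_eq_abs, abs_of_nonneg (by positivity)]
    have h5 : ((‖x - y‖ ^ 2) ^ 2)⁻¹ * ‖x - y - P x (x - y)‖ ^ 2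
        ≤ ((‖x - y‖ ^ 2) ^ 2)⁻¹ * (‖x - y‖ ^ 2) :=
      mul_le_mul_of_nonneg_left hXp (by positivity)
    have h6 : ((‖x - y‖ ^ 2) ^ 2)⁻¹ * (‖x - y‖ ^ 2) = (‖x - y‖ ^ 2)⁻¹ := by
      field_simp
    have h7 : (‖x - y‖ ^ 2)⁻¹ ≤ (σ ^ 2)⁻¹ := inv_anti₀ hs2 hqs.le
    linarith
  have hK_int : IntegrableOn (fun x => (‖x - y‖ ^ 2)⁻¹ * ⟪x - y, H x⟫)
      (ball y ρ \ ball y σ) μ := by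
    apply Integrable.mono' ((hH1.norm.const_mul ((σ ^ 2)⁻¹ * ρ)).restrict)
      ((hq_meas.inv.aemeasurable.mul hinner_aesm.aemeasurable).aestronglyMeasurable.restrict)
    rw [ae_restrict_iff' hAmeas]
    filter_upwards [hannbound] with x h2 hxA
    obtain ⟨hqs, hqr⟩ := h2 hxA
    have hq0 : 0 < ‖x - y‖ ^ 2 := lt_trans hs2 hqs
    have hXρ : ‖x - y‖ ≤ ρ := by
      have := (hball ρ hρ x).2
      nlinarith [norm_nonneg (x - y)]
    show ‖(‖x - y‖ ^ 2)⁻¹ * ⟪x - y, H x⟫‖ ≤ (σ ^ 2)⁻¹ * ρ * ‖H x‖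
    rw [Real.norm_eq_abs, abs_mul, abs_of_nonneg (by positivity : (0:ℝ) ≤ (‖x - y‖ ^ 2)⁻¹)]
    have e1 : |⟪x - y, H x⟫| ≤ ρ * ‖H x‖ :=
      le_trans (abs_real_inner_le_norm _ _)
        (mul_le_mul_of_nonneg_right hXρ (norm_nonneg _))
    have e2 : (‖x - y‖ ^ 2)⁻¹ ≤ (σ ^ 2)⁻¹ := inv_anti₀ hs2 hqs.le
    calc (‖x - y‖ ^ 2)⁻¹ * |⟪x - y, H x⟫| ≤ (σ ^ 2)⁻¹ * (ρ * ‖H x‖) :=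
          mul_le_mul e2 e1 (abs_nonneg _) (inv_nonneg.2 hs2.le)
      _ = (σ ^ 2)⁻¹ * ρ * ‖H x‖ := by ring
  -- splitting ∫ GL over the regions
  have hGLcompl : ∫ x in (ball y ρ)ᶜ, (2 * Glim (σ ^ 2) (ρ ^ 2) (‖x - y‖ ^ 2)
      + 2 * Glim' (σ ^ 2) (ρ ^ 2) (‖x - y‖ ^ 2) * ⟪P x (x - y), x - y⟫) ∂μ = 0 := by
    have h0 : (fun x => (2 * Glim (σ ^ 2) (ρ ^ 2) (‖x - y‖ ^ 2)
      + 2 * Glim' (σ ^ 2) (ρ ^ 2) (‖x - y‖ ^ 2) * ⟪P x (x - y), x - y⟫)) =ᵐ[μ.restrict (ball y ρ)ᶜ] fun _ => (0:ℝ) := by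
      rw [EventuallyEq, ae_restrict_iff' measurableSet_ball.compl]
      filter_upwards [hsph] with x hx hxc
      have hge : ρ ^ 2 ≤ ‖x - y‖ ^ 2 := le_of_not_gt (fun h => hxc ((hball ρ hρ x).2 h))
      rw [Glim_high hsr.le hge, Glim'_high hge]
      ring
    rw [integral_congr_ae h0, integral_zero]
  have hsplitGL : ∫ x, (2 * Glim (σ ^ 2) (ρ ^ 2) (‖x - y‖ ^ 2)
      + 2 * Glim' (σ ^ 2) (ρ ^ 2) (‖x - y‖ ^ 2) * ⟪P x (x - y), x - y⟫) ∂μ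
      = (∫ x in ball y σ, (2 * Glim (σ ^ 2) (ρ ^ 2) (‖x - y‖ ^ 2)
      + 2 * Glim' (σ ^ 2) (ρ ^ 2) (‖x - y‖ ^ 2) * ⟪P x (x - y), x - y⟫) ∂μ) + (∫ x in ball y ρ \ ball y σ, (2 * Glim (σ ^ 2) (ρ ^ 2) (‖x - y‖ ^ 2)
      + 2 * Glim' (σ ^ 2) (ρ ^ 2) (‖x - y‖ ^ 2) * ⟪P x (x - y), x - y⟫) ∂μ) := by
    rw [← integral_add_compl (measurableSet_ball : MeasurableSet (ball y ρ)) intGL, hGLcompl,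
      add_zero, ← hSA, setIntegral_union hdisj hAmeas intGL.integrableOn intGL.integrableOn,
      hSA]
  have hS_GL : ∫ x in ball y σ, (2 * Glim (σ ^ 2) (ρ ^ 2) (‖x - y‖ ^ 2)
      + 2 * Glim' (σ ^ 2) (ρ ^ 2) (‖x - y‖ ^ 2) * ⟪P x (x - y), x - y⟫) ∂μ
      = 2 * ((σ ^ 2)⁻¹ - (ρ ^ 2)⁻¹) * (μ (ball y σ)).toReal := by
    rw [setIntegral_congr_fun measurableSet_ball
      (g := fun _ : E3 => 2 * ((σ ^ 2)⁻¹ - (ρ ^ 2)⁻¹)) ?_]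
    · rw [setIntegral_const, smul_eq_mul, mul_comm, measureReal_def]
    · intro x hx
      dsimp only
      have hq : ‖x - y‖ ^ 2 < σ ^ 2 := (hball σ hσ x).1 hx
      rw [Glim_low hsr hq, Glim'_low hq]
      ring
  have hA_GL : ∫ x in ball y ρ \ ball y σ, (2 * Glim (σ ^ 2) (ρ ^ 2) (‖x - y‖ ^ 2)
      + 2 * Glim' (σ ^ 2) (ρ ^ 2) (‖x - y‖ ^ 2) * ⟪P x (x - y), x - y⟫) ∂μ
      = -2 * (ρ ^ 2)⁻¹ * (μ (ball y ρ \ ball y σ)).toReal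
        + 2 * ∫ x in ball y ρ \ ball y σ,
            ((‖x - y‖ ^ 2) ^ 2)⁻¹ * ‖x - y - P x (x - y)‖ ^ 2 ∂μ := by
    have hae : (fun x => (2 * Glim (σ ^ 2) (ρ ^ 2) (‖x - y‖ ^ 2)
      + 2 * Glim' (σ ^ 2) (ρ ^ 2) (‖x - y‖ ^ 2) * ⟪P x (x - y), x - y⟫)) =ᵐ[μ.restrict (ball y ρ \ ball y σ)]
        fun x => -2 * (ρ ^ 2)⁻¹
          + 2 * (((‖x - y‖ ^ 2) ^ 2)⁻¹ * ‖x - y - P x (x - y)‖ ^ 2) := by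
      rw [EventuallyEq, ae_restrict_iff' hAmeas]
      filter_upwards [hgood, hannbound] with x h1 h2 hxA
      obtain ⟨hqs, hqr⟩ := h2 hxA
      rw [Glim_mid hqs hqr, Glim'_mid hqs hqr, ← h1.2.2.1]
      have hq0 : (‖x - y‖ ^ 2) ≠ 0 := ne_of_gt (lt_trans hs2 hqs)
      have hn0 : ‖x - y‖ ≠ 0 := fun h => hq0 (by rw [h]; ring)
      field_simp
      ring
    rw [integral_congr_ae hae,
      integral_add (integrable_const _) (hJ_int.const_mul 2), setIntegral_const,
      smul_eq_mul, integral_const_mul, measureReal_def]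
    ring
  -- splitting ∫ RL over the regions
  have hRLcompl : ∫ x in (ball y ρ)ᶜ,
      Glim (σ ^ 2) (ρ ^ 2) (‖x - y‖ ^ 2) * ⟪x - y, H x⟫ ∂μ = 0 := by
    have h0 : (fun x => Glim (σ ^ 2) (ρ ^ 2) (‖x - y‖ ^ 2) * ⟪x - y, H x⟫)
        =ᵐ[μ.restrict (ball y ρ)ᶜ] fun _ => (0:ℝ) := by
      rw [EventuallyEq, ae_restrict_iff' measurableSet_ball.compl]
      filter_upwards [hsph] with x hx hxc
      have hge : ρ ^ 2 ≤ ‖x - y‖ ^ 2 := le_of_not_gt (fun h => hxc ((hball ρ hρ x).2 h))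
      rw [Glim_high hsr.le hge, zero_mul]
    rw [integral_congr_ae h0, integral_zero]
  have hsplitRL : ∫ x, Glim (σ ^ 2) (ρ ^ 2) (‖x - y‖ ^ 2) * ⟪x - y, H x⟫ ∂μ
      = (∫ x in ball y σ, Glim (σ ^ 2) (ρ ^ 2) (‖x - y‖ ^ 2) * ⟪x - y, H x⟫ ∂μ)
        + (∫ x in ball y ρ \ ball y σ,
            Glim (σ ^ 2) (ρ ^ 2) (‖x - y‖ ^ 2) * ⟪x - y, H x⟫ ∂μ) := by
    rw [← integral_add_compl (measurableSet_ball : MeasurableSet (ball y ρ)) intRL, hRLcompl,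
      add_zero, ← hSA, setIntegral_union hdisj hAmeas intRL.integrableOn intRL.integrableOn,
      hSA]
  have hS_RL : ∫ x in ball y σ, Glim (σ ^ 2) (ρ ^ 2) (‖x - y‖ ^ 2) * ⟪x - y, H x⟫ ∂μ
      = ((σ ^ 2)⁻¹ - (ρ ^ 2)⁻¹) * ∫ x in ball y σ, ⟪x - y, H x⟫ ∂μ := by
    rw [setIntegral_congr_fun measurableSet_ball
      (g := fun x : E3 => ((σ ^ 2)⁻¹ - (ρ ^ 2)⁻¹) * ⟪x - y, H x⟫) ?_]
    · rw [integral_const_mul]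
    · intro x hx
      dsimp only
      have hq : ‖x - y‖ ^ 2 < σ ^ 2 := (hball σ hσ x).1 hx
      rw [Glim_low hsr hq]
  have hA_RL : ∫ x in ball y ρ \ ball y σ,
        Glim (σ ^ 2) (ρ ^ 2) (‖x - y‖ ^ 2) * ⟪x - y, H x⟫ ∂μ
      = (∫ x in ball y ρ \ ball y σ, (‖x - y‖ ^ 2)⁻¹ * ⟪x - y, H x⟫ ∂μ)
        - (ρ ^ 2)⁻¹ * ∫ x in ball y ρ \ ball y σ, ⟪x - y, H x⟫ ∂μ := by
    have hae : (fun x => Glim (σ ^ 2) (ρ ^ 2) (‖x - y‖ ^ 2) * ⟪x - y, H x⟫)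
        =ᵐ[μ.restrict (ball y ρ \ ball y σ)]
        fun x => (‖x - y‖ ^ 2)⁻¹ * ⟪x - y, H x⟫ - (ρ ^ 2)⁻¹ * ⟪x - y, H x⟫ := by
      rw [EventuallyEq, ae_restrict_iff' hAmeas]
      filter_upwards [hannbound] with x h2 hxA
      obtain ⟨hqs, hqr⟩ := h2 hxA
      rw [Glim_mid hqs hqr]
      ring
    rw [integral_congr_ae hae, integral_sub hK_int (hIA.const_mul ((ρ ^ 2)⁻¹)),
      integral_const_mul]
  -- the annulus integral of the target integrand
  have hTgt : ∫ x in ball y ρ \ ball y σ,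
        ‖(1 / 2 : ℝ) • H x + (‖x - y‖ ^ 2)⁻¹ • (x - y - P x (x - y))‖ ^ 2 ∂μ
      = (1 / 4 : ℝ) * (∫ x in ball y ρ \ ball y σ, ‖H x‖ ^ 2 ∂μ)
        + ((∫ x in ball y ρ \ ball y σ, (‖x - y‖ ^ 2)⁻¹ * ⟪x - y, H x⟫ ∂μ)
          + (∫ x in ball y ρ \ ball y σ,
              ((‖x - y‖ ^ 2) ^ 2)⁻¹ * ‖x - y - P x (x - y)‖ ^ 2 ∂μ)) := by
    have hae : (fun x => ‖(1 / 2 : ℝ) • H x + (‖x - y‖ ^ 2)⁻¹ • (x - y - P x (x - y))‖ ^ 2)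
        =ᵐ[μ.restrict (ball y ρ \ ball y σ)]
        fun x => (1 / 4 : ℝ) * ‖H x‖ ^ 2 + ((‖x - y‖ ^ 2)⁻¹ * ⟪x - y, H x⟫
          + ((‖x - y‖ ^ 2) ^ 2)⁻¹ * ‖x - y - P x (x - y)‖ ^ 2) := by
      rw [EventuallyEq, ae_restrict_iff' hAmeas]
      filter_upwards [hgood, hannbound] with x h1 h2 hxA
      obtain ⟨hqs, hqr⟩ := h2 hxA
      have hq0 : 0 < ‖x - y‖ ^ 2 := lt_trans hs2 hqs
      rw [norm_add_sq_real, real_inner_smul_left, real_inner_smul_right, h1.2.2.2,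
        norm_smul, norm_smul, Real.norm_eq_abs, Real.norm_eq_abs,
        abs_of_pos (by norm_num : (0:ℝ) < 1/2), abs_of_pos (inv_pos.2 hq0)]
      ring
    have hKJ : IntegrableOn (fun x => (‖x - y‖ ^ 2)⁻¹ * ⟪x - y, H x⟫
        + ((‖x - y‖ ^ 2) ^ 2)⁻¹ * ‖x - y - P x (x - y)‖ ^ 2) (ball y ρ \ ball y σ) μ :=
      hK_int.add hJ_int
    rw [integral_congr_ae hae,
      integral_add ((hH2.integrableOn (s := ball y ρ \ ball y σ)).const_mul (1/4 : ℝ)) hKJ,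
      integral_add hK_int hJ_int, integral_const_mul]
  -- measure and inner-product splittings over the ball of radius ρ
  have hμsplit : (μ (ball y ρ)).toReal
      = (μ (ball y σ)).toReal + (μ (ball y ρ \ ball y σ)).toReal := by
    rw [← hSA, measure_union hdisj hAmeas,
      ENNReal.toReal_add (measure_ne_top μ _) (measure_ne_top μ _), hSA]
  have hIsplit : ∫ x in ball y ρ, ⟪x - y, H x⟫ ∂μ
      = (∫ x in ball y σ, ⟪x - y, H x⟫ ∂μ)
        + ∫ x in ball y ρ \ ball y σ, ⟪x - y, H x⟫ ∂μ := by
    rw [← hSA, setIntegral_union hdisj hAmeas hIS hIA, hSA]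
  -- final linear algebra
  have hlin := hkey
  rw [hsplitGL, hS_GL, hA_GL, hsplitRL, hS_RL, hA_RL] at hlin
  rw [hTgt, hIsplit, hμsplit]
  linear_combination hlin / 2





end
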